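/- arXiv:1205.4161 — 3 statements merged into one kernel-verified Lean document; each statement's English description precedes it below -/
import Mathlib

section
/- If k divides n, then the hypercube Q_k divides the hypercube Q_n. -/
open SimpleGraph

/-- `H` divides `G`: the edge set of `G` can be partitioned into edge sets of
subgraphs of `G`, each isomorphic to `H`. -/
def GraphDivides {α β : Type} (H : SimpleGraph α) (G : SimpleGraph β) : Prop :=
  ∃ (ι : Type) (f : ι → G.Subgraph),
    (∀ i, Nonempty (H ≃g (f i).coe)) ∧
    ∀ e ∈ G.edgeSet, ∃! i, e ∈ (f i).edgeSet

/-- The `n`-dimensional hypercube graph. -/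
def cube (n : ℕ) : SimpleGraph (Fin n → ZMod 2) where
  Adj x y := hammingDist x y = 1
  symm := ⟨fun x y h => (hammingDist_comm y x).trans h⟩
  loopless := ⟨fun x h => by simp [hammingDist_self] at h⟩

namespace CubeDiv

/-- The set of vertices agreeing with `g` outside the `j`-th block of `k` coordinates. -/
def blockVerts (k : ℕ) {n : ℕ} (j : ℕ) (g : Fin n → ZMod 2) : Set (Fin n → ZMod 2) :=
  {x | ∀ i : Fin n, (i : ℕ) / k ≠ j → x i = g i}

/-- The subgraph of `cube n` induced (as far as edges go) on `blockVerts k j g`. -/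
def blockSub (k : ℕ) {n : ℕ} (j : ℕ) (g : Fin n → ZMod 2) : (cube n).Subgraph where
  verts := blockVerts k j g
  Adj x y := (cube n).Adj x y ∧ x ∈ blockVerts k j g ∧ y ∈ blockVerts k j g
  adj_sub h := h.1
  edge_vert h := h.2.1
  symm := ⟨fun x y h => ⟨h.1.symm, h.2.2, h.2.1⟩⟩

/-- Extend `y : Fin k → ZMod 2` into the `j`-th block, using `g` outside. -/
def phi (k : ℕ) {n : ℕ} (j : ℕ) (hk : 0 < k) (g : Fin n → ZMod 2)
    (y : Fin k → ZMod 2) : Fin n → ZMod 2 :=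
  fun i => if (i : ℕ) / k = j then y ⟨(i : ℕ) % k, Nat.mod_lt _ hk⟩ else g i

variable {k n : ℕ}

lemma phi_mem (j : ℕ) (hk : 0 < k) (g : Fin n → ZMod 2) (y : Fin k → ZMod 2) :
    phi k j hk g y ∈ blockVerts k j g := by
  intro i hi
  simp [phi, hi]

/-- The embedding of `Fin k` into the `j`-th block of `Fin n`. -/
def emb (k : ℕ) {n : ℕ} (j : ℕ) (hjn : j * k + k ≤ n) (t : Fin k) : Fin n :=
  ⟨j * k + t, by have := t.isLt; omega⟩

lemma emb_div (j : ℕ) (hjn : j * k + k ≤ n) (t : Fin k) :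
    ((emb k j hjn t : Fin n) : ℕ) / k = j := by
  have hk : 0 < k := by have := t.isLt; omega
  have := t.isLt
  simp only [emb]
  rw [Nat.add_comm, Nat.add_mul_div_right _ _ hk, Nat.div_eq_of_lt this]
  omega

lemma emb_mod (j : ℕ) (hjn : j * k + k ≤ n) (t : Fin k) :
    ((emb k j hjn t : Fin n) : ℕ) % k = t := by
  have := t.isLt
  simp only [emb]
  rw [Nat.add_comm, Nat.add_mul_mod_self_right, Nat.mod_eq_of_lt this]

lemma phi_emb (j : ℕ) (hk : 0 < k) (hjn : j * k + k ≤ n) (g : Fin n → ZMod 2)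
    (y : Fin k → ZMod 2) (t : Fin k) : phi k j hk g y (emb k j hjn t) = y t := by
  simp only [phi, emb_div j hjn t, if_true]
  congr 1
  exact Fin.ext (emb_mod j hjn t)

lemma phi_of_mem (j : ℕ) (hk : 0 < k) (hjn : j * k + k ≤ n) (g : Fin n → ZMod 2)
    (x : Fin n → ZMod 2) (hx : x ∈ blockVerts k j g) :
    phi k j hk g (fun t => x (emb k j hjn t)) = x := by
  funext i
  by_cases hi : (i : ℕ) / k = j
  · have hemb : emb k j hjn ⟨(i : ℕ) % k, Nat.mod_lt _ hk⟩ = i := by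
      apply Fin.ext
      simp only [emb]
      conv_rhs => rw [← Nat.div_add_mod (i : ℕ) k]
      rw [hi, Nat.mul_comm]
    simp only [phi, hi, if_true, hemb]
  · simp only [phi, hi, if_false]
    exact (hx i hi).symm

lemma hd_phi (j : ℕ) (hk : 0 < k) (hjn : j * k + k ≤ n) (g : Fin n → ZMod 2)
    (y y' : Fin k → ZMod 2) :
    hammingDist (phi k j hk g y) (phi k j hk g y') = hammingDist y y' := by
  unfold hammingDist
  refine Finset.card_nbij' (fun i => (⟨(i : ℕ) % k, Nat.mod_lt _ hk⟩ : Fin k))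
    (emb k j hjn) ?_ ?_ ?_ ?_
  · intro i hi
    simp only [Finset.mem_coe, Finset.mem_filter, Finset.mem_univ, true_and] at hi ⊢
    by_cases hdiv : (i : ℕ) / k = j
    · simpa only [phi, hdiv, if_true] using hi
    · simp only [phi, hdiv, if_false] at hi
      exact absurd rfl hi
  · intro t ht
    simp only [Finset.mem_coe, Finset.mem_filter, Finset.mem_univ, true_and] at ht ⊢
    rwa [phi_emb, phi_emb]
  · intro i hi
    simp only [Finset.mem_coe, Finset.mem_filter, Finset.mem_univ, true_and] at hi
    by_cases hdiv : (i : ℕ) / k = j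
    · apply Fin.ext
      simp only [emb]
      conv_rhs => rw [← Nat.div_add_mod (i : ℕ) k]
      rw [hdiv, Nat.mul_comm]
    · simp only [phi, hdiv, if_false] at hi
      exact absurd rfl hi
  · intro t ht
    apply Fin.ext
    exact emb_mod j hjn t

lemma iso_block (j : ℕ) (hk : 0 < k) (hjn : j * k + k ≤ n) (g : Fin n → ZMod 2) :
    Nonempty (cube k ≃g (blockSub k j g).coe) := by
  refine ⟨⟨⟨fun y => ⟨phi k j hk g y, phi_mem j hk g y⟩,
      fun x => fun t => (x : Fin n → ZMod 2) (emb k j hjn t), ?_, ?_⟩, ?_⟩⟩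
  · intro y
    funext t
    exact phi_emb j hk hjn g y t
  · intro x
    exact Subtype.ext (phi_of_mem j hk hjn g x x.2)
  · intro y y'
    show (blockSub k j g).Adj _ _ ↔ (cube k).Adj y y'
    constructor
    · rintro ⟨hadj, -, -⟩
      show hammingDist y y' = 1
      rw [← hd_phi j hk hjn g y y']
      exact hadj
    · intro hadj
      refine ⟨?_, phi_mem j hk g y, phi_mem j hk g y'⟩
      show hammingDist (phi k j hk g y) (phi k j hk g y') = 1
      rw [hd_phi j hk hjn g y y']
      exact hadj

end CubeDiv

open CubeDiv in
theorem cube_divides_cube_of_dvd (k n : ℕ) (h : k ∣ n) :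
    GraphDivides (cube k) (cube n) := by
  obtain ⟨m, hn⟩ := h
  by_cases h0 : n = 0
  · subst h0
    refine ⟨Empty, fun i => i.elim, fun i => i.elim, fun e he => ?_⟩
    exfalso
    revert he
    refine Sym2.ind (fun x y he => ?_) e
    rw [SimpleGraph.mem_edgeSet] at he
    have hxy : x = y := funext fun i => i.elim0
    exact (cube 0).loopless.irrefl y (hxy ▸ he)
  · have hk : 0 < k := by
      rcases Nat.eq_zero_or_pos k with h' | h'
      · exact absurd (by simp [h'] at hn; exact hn) h0
      · exact h'
    have hm : 0 < m := by
      rcases Nat.eq_zero_or_pos m with h' | h'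
      · exact absurd (by simp [h'] at hn; exact hn) h0
      · exact h'
    refine ⟨{p : Fin m × (Fin n → ZMod 2) // ∀ i : Fin n, (i : ℕ) / k = (p.1 : ℕ) → p.2 i = 0},
      fun p => blockSub k (p.1.1 : ℕ) p.1.2, ?_, ?_⟩
    · intro p
      refine iso_block _ hk ?_ _
      have hp := p.1.1.isLt
      calc (p.1.1 : ℕ) * k + k = ((p.1.1 : ℕ) + 1) * k := by ring
        _ ≤ m * k := Nat.mul_le_mul_right k hp
        _ = n := by rw [hn, Nat.mul_comm]
    · intro e
      refine Sym2.ind (fun x y he => ?_) e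
      rw [SimpleGraph.mem_edgeSet] at he
      have hadj : hammingDist x y = 1 := he
      rw [hammingDist, Finset.card_eq_one] at hadj
      obtain ⟨i0, hi0⟩ := hadj
      have hne0 : x i0 ≠ y i0 := by
        have : i0 ∈ ({i0} : Finset (Fin n)) := Finset.mem_singleton_self i0
        rw [← hi0] at this
        simpa using this
      have hxy : ∀ i : Fin n, i ≠ i0 → x i = y i := by
        intro i hi
        by_contra hne
        have : i ∈ ({i0} : Finset (Fin n)) := by
          rw [← hi0]; simpa using hne
        exact hi (Finset.mem_singleton.mp this)
      set j0 : ℕ := (i0 : ℕ) / k with hj0def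
      have hj0 : j0 < m := by
        rw [hj0def, Nat.div_lt_iff_lt_mul hk]
        have h1 := i0.isLt
        have h2 : n = m * k := by rw [hn, Nat.mul_comm]
        exact lt_of_lt_of_eq h1 h2
      set g : Fin n → ZMod 2 := fun i => if (i : ℕ) / k = j0 then 0 else x i with hg
      refine ⟨⟨(⟨j0, hj0⟩, g), fun i hi => by simp only [hg]; simp_all⟩, ?_, ?_⟩
      · show s(x, y) ∈ (blockSub k j0 g).edgeSet
        rw [SimpleGraph.Subgraph.mem_edgeSet]
        refine ⟨he, ?_, ?_⟩
        · intro i hi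
          simp only [hg, hi, if_false]
        · intro i hi
          have hii0 : i ≠ i0 := by
            intro hi'
            subst hi'
            exact hi rfl
          simp only [hg, hi, if_false]
          exact (hxy i hii0).symm
      · rintro ⟨⟨j', g'⟩, hq⟩ hmem
        show _ = (⟨(⟨j0, hj0⟩, g), _⟩ : {p : Fin m × (Fin n → ZMod 2) //
          ∀ i : Fin n, (i : ℕ) / k = (p.1 : ℕ) → p.2 i = 0})
        rw [SimpleGraph.Subgraph.mem_edgeSet] at hmem
        obtain ⟨-, hVx, hVy⟩ := hmem
        have hj' : (i0 : ℕ) / k = (j' : ℕ) := by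
          by_contra hne
          exact hne0 ((hVx i0 hne).trans (hVy i0 hne).symm)
        have hj'v : (j' : ℕ) = j0 := hj'.symm.trans hj0def.symm
        have hjeq : j' = ⟨j0, hj0⟩ := Fin.ext hj'v
        have hgeq : g' = g := by
          funext i
          by_cases hi : (i : ℕ) / k = j0
          · rw [hg]
            simp only [hi, if_true]
            exact hq i (hi.trans hj'v.symm)
          · rw [hg]
            simp only [hi, if_false]
            exact (hVx i (fun hc => hi (hc.trans hj'v))).symm
        exact Subtype.ext (Prod.ext hjeq hgeq)
end

section
/- For every k ≥ 3, the path P_{2^k} with 2^k edges does not divide the hypercube Q_{2k+1}. -/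
open SimpleGraph

open Finset

attribute [local instance] Classical.propDecidable

/-! ### Path graph lemmas -/

lemma pathGraph_degree (m : ℕ) (v : Fin (m + 2)) :
    (pathGraph (m + 2)).degree v = if v.val = 0 ∨ v.val = m + 1 then 1 else 2 := by
  rw [← card_neighborFinset_eq_degree]
  rcases eq_or_ne v.val 0 with h0 | h0
  · have : (pathGraph (m + 2)).neighborFinset v = {⟨1, by omega⟩} := by
      ext w
      simp only [mem_neighborFinset, pathGraph_adj, Finset.mem_singleton, Fin.ext_iff]
      omega
    rw [this]
    simp [h0]
  rcases eq_or_ne v.val (m + 1) with h1 | h1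
  · have : (pathGraph (m + 2)).neighborFinset v = {⟨m, by omega⟩} := by
      ext w
      simp only [mem_neighborFinset, pathGraph_adj, Finset.mem_singleton, Fin.ext_iff]
      omega
    rw [this]
    simp [h1]
  · have : (pathGraph (m + 2)).neighborFinset v =
        {⟨v.val - 1, by omega⟩, ⟨v.val + 1, by omega⟩} := by
      ext w
      simp only [mem_neighborFinset, pathGraph_adj, Finset.mem_insert, Finset.mem_singleton,
        Fin.ext_iff]
      omega
    rw [this, Finset.card_insert_of_notMem (by simp [Fin.ext_iff]), Finset.card_singleton]
    rw [if_neg (by omega)]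

lemma pathGraph_ends_card (m : ℕ) :
    (univ.filter fun v : Fin (m + 2) => v.val = 0 ∨ v.val = m + 1).card = 2 := by
  have : (univ.filter fun v : Fin (m + 2) => v.val = 0 ∨ v.val = m + 1) =
      {⟨0, by omega⟩, ⟨m + 1, by omega⟩} := by
    ext w
    simp only [Finset.mem_filter, Finset.mem_univ, true_and, Finset.mem_insert,
      Finset.mem_singleton, Fin.ext_iff]
  rw [this, Finset.card_insert_of_notMem (by simp [Fin.ext_iff]), Finset.card_singleton]

lemma pathGraph_card_edges (m : ℕ) : (pathGraph (m + 2)).edgeFinset.card = m + 1 := by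
  have hs := sum_degrees_eq_twice_card_edges (pathGraph (m + 2))
  have : ∑ v : Fin (m + 2), (pathGraph (m + 2)).degree v = 2 * (m + 1) := by
    simp_rw [pathGraph_degree]
    rw [Finset.sum_ite, Finset.sum_const, Finset.sum_const, pathGraph_ends_card,
      Finset.filter_not, Finset.card_sdiff_of_subset (Finset.filter_subset _ _), pathGraph_ends_card]
    simp
    omega
  omega

lemma pathGraph_odd_card (m : ℕ) :
    (univ.filter fun v : Fin (m + 2) => Odd ((pathGraph (m + 2)).degree v)).card = 2 := by
  have : (univ.filter fun v : Fin (m + 2) => Odd ((pathGraph (m + 2)).degree v)) =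
      (univ.filter fun v : Fin (m + 2) => v.val = 0 ∨ v.val = m + 1) := by
    apply Finset.filter_congr
    intro v _
    rw [pathGraph_degree]
    split <;> simp_all [Nat.odd_iff]
  rw [this, pathGraph_ends_card]

/-! ### ncard versions (instance-independent) -/

lemma ncard_neighborSet {α : Type} [Fintype α] (G : SimpleGraph α) (v : α) :
    (G.neighborSet v).ncard = G.degree v := by
  rw [← card_neighborSet_eq_degree, ← Nat.card_eq_fintype_card, Nat.card_coe_set_eq]

lemma pathGraph_card_edges' (n : ℕ) (h : 1 ≤ n) : (pathGraph (n + 1)).edgeFinset.card = n := by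
  obtain ⟨m, rfl⟩ : ∃ m, n = m + 1 := ⟨n - 1, by omega⟩
  exact pathGraph_card_edges m

lemma pathGraph_odd_ncard (n : ℕ) (h : 1 ≤ n) :
    (univ.filter fun v : Fin (n + 1) =>
      Odd ((pathGraph (n + 1)).neighborSet v).ncard).card = 2 := by
  obtain ⟨m, rfl⟩ : ∃ m, n = m + 1 := ⟨n - 1, by omega⟩
  rw [← pathGraph_odd_card m]
  congr 1
  apply Finset.filter_congr
  intro v _
  rw [ncard_neighborSet]

lemma iso_ncard_deg {α β : Type} {H : SimpleGraph α} {G : SimpleGraph β} (e : H ≃g G)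
    (v : α) : (G.neighborSet (e v)).ncard = (H.neighborSet v).ncard := by
  rw [← Nat.card_coe_set_eq, ← Nat.card_coe_set_eq]
  exact (Nat.card_congr (e.mapNeighborSet v)).symm

lemma iso_odd_ncard {α β : Type} [Fintype α] [Fintype β] {H : SimpleGraph α}
    {G : SimpleGraph β} (e : H ≃g G) :
    (univ.filter fun v : β => Odd (G.neighborSet v).ncard).card =
      (univ.filter fun v : α => Odd (H.neighborSet v).ncard).card := by
  apply Finset.card_bij (fun v _ => e.symm v)
  · intro v hv
    simp only [Finset.mem_filter, Finset.mem_univ, true_and] at hv ⊢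
    rw [← iso_ncard_deg e (e.symm v), e.apply_symm_apply]; exact hv
  · intro a _ b _ h
    exact e.symm.injective h
  · intro b hb
    refine ⟨e b, ?_, by simp⟩
    simp only [Finset.mem_filter, Finset.mem_univ, true_and] at hb ⊢
    rwa [iso_ncard_deg e]

/-! ### Cube lemmas -/

lemma zmod2_ne {a b : ZMod 2} (h : a ≠ b) : a = b + 1 := by revert h; revert a b; decide

lemma cube_adj_update (n : ℕ) (x : Fin n → ZMod 2) (i : Fin n) :
    (cube n).Adj x (Function.update x i (x i + 1)) := by
  show hammingDist x (Function.update x i (x i + 1)) = 1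
  rw [hammingDist, Finset.card_eq_one]
  refine ⟨i, ?_⟩
  ext j
  simp only [Finset.mem_filter, Finset.mem_univ, true_and, Finset.mem_singleton]
  rcases eq_or_ne j i with rfl | hj
  · simp [Function.update_self]
  · simp [Function.update_of_ne hj, hj]

lemma cube_adj_iff (n : ℕ) (x y : Fin n → ZMod 2) :
    (cube n).Adj x y ↔ ∃ i, y = Function.update x i (x i + 1) := by
  constructor
  · intro h
    obtain ⟨i, hi⟩ := Finset.card_eq_one.mp h
    refine ⟨i, funext fun j => ?_⟩
    rcases eq_or_ne j i with rfl | hj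
    · have : j ∈ ({j | x j ≠ y j} : Finset (Fin n)) := by
        rw [hi]; exact Finset.mem_singleton_self j
      simp only [Finset.mem_filter, Finset.mem_univ, true_and, Set.mem_setOf_eq] at this
      rw [Function.update_self]
      exact zmod2_ne (Ne.symm this)
    · have : j ∉ ({j | x j ≠ y j} : Finset (Fin n)) := by
        rw [hi]; simpa using hj
      simp only [Finset.mem_filter, Finset.mem_univ, true_and, Set.mem_setOf_eq,
        not_not] at this
      rw [Function.update_of_ne hj]
      exact this.symm
  · rintro ⟨i, rfl⟩
    exact cube_adj_update n x i

lemma update_inj (n : ℕ) (x : Fin n → ZMod 2) :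
    Function.Injective (fun i => Function.update x i (x i + 1)) := by
  intro i j h
  by_contra hij
  have := congrFun h i
  simp only [Function.update_self, Function.update_of_ne hij] at this
  exact one_ne_zero (by linear_combination (norm := (simp; ring_nf)) this)

lemma cube_degree (n : ℕ) (x : Fin n → ZMod 2) : (cube n).degree x = n := by
  rw [← card_neighborFinset_eq_degree]
  have : (cube n).neighborFinset x =
      Finset.image (fun i => Function.update x i (x i + 1)) univ := by
    ext y
    simp only [mem_neighborFinset, Finset.mem_image, Finset.mem_univ, true_and,
      cube_adj_iff]
    exact exists_congr fun i => eq_comm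
  rw [this, Finset.card_image_of_injective _ (update_inj n x), Finset.card_univ,
    Fintype.card_fin]

lemma two_pow_big (k : ℕ) (hk : 3 ≤ k) : 2 * k + 1 < 2 ^ k := by
  induction k, hk using Nat.le_induction with
  | base => norm_num
  | succ n hn ih => rw [pow_succ]; omega

theorem path_pow_two_not_divides_cube (k : ℕ) (hk : 3 ≤ k) :
    ¬ GraphDivides (pathGraph (2 ^ k + 1)) (cube (2 * k + 1)) := by
  rintro ⟨ι, f, hiso, hcov⟩
  have hp1 : 1 ≤ 2 ^ k := Nat.one_le_two_pow
  -- each subgraph has a nonempty edge set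
  have hedge : ∀ i, ((f i).edgeSet).Nonempty := by
    intro i
    obtain ⟨e⟩ := hiso i
    have hadj : (pathGraph (2 ^ k + 1)).Adj ⟨0, by omega⟩ ⟨1, by omega⟩ := by
      rw [pathGraph_adj]; left; rfl
    have := e.map_rel_iff.mpr hadj
    rw [Subgraph.coe_adj] at this
    exact ⟨_, Subgraph.mem_edgeSet.mpr this⟩
  have hsub : ∀ i, ∀ e ∈ (f i).edgeSet, e ∈ (cube (2 * k + 1)).edgeSet := fun i e he =>
    (f i).edgeSet_subset he
  -- ι is finite
  have : Finite ι := by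
    apply Finite.of_injective (fun i =>
      (⟨(hedge i).choose, hsub i _ (hedge i).choose_spec⟩ : (cube (2 * k + 1)).edgeSet))
    intro i j hij
    have h1 := (hedge i).choose_spec
    have h2 := (hedge j).choose_spec
    rw [Subtype.mk_eq_mk] at hij
    rw [hij] at h1
    exact ((hcov _ (hsub j _ h2)).unique h1 h2)
  haveI : Fintype ι := Fintype.ofFinite ι
  set n := Fintype.card ι with hn
  -- edge partition
  set s : ι → Finset (Sym2 (Fin (2 * k + 1) → ZMod 2)) := fun i => (f i).edgeSet.toFinset
    with hs
  have hdisj : ∀ e i j, e ∈ s i → e ∈ s j → i = j := by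
    intro e i j hi hj
    rw [hs, Set.mem_toFinset] at hi hj
    exact (hcov e (hsub i e hi)).unique hi hj
  have hunion : univ.biUnion s = (cube (2 * k + 1)).edgeFinset := by
    ext e
    simp only [Finset.mem_biUnion, Finset.mem_univ, true_and, mem_edgeFinset, hs,
      Set.mem_toFinset]
    constructor
    · rintro ⟨i, hi⟩; exact hsub i e hi
    · intro he; obtain ⟨i, hi, -⟩ := hcov e he; exact ⟨i, hi⟩
  have hcard : (cube (2 * k + 1)).edgeFinset.card = ∑ i, (s i).card := by
    rw [← hunion]
    exact Finset.card_biUnion (fun i _ j _ hij =>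
      Finset.disjoint_left.mpr fun e hei hej => hij (hdisj e i j hei hej))
  -- each part has 2^k edges
  have hpart : ∀ i, (s i).card = 2 ^ k := by
    intro i
    obtain ⟨e⟩ := hiso i
    have h1 : ((f i).coe.edgeFinset).card = 2 ^ k := by
      rw [← Iso.card_edgeFinset_eq e, pathGraph_card_edges' _ hp1]
    have h2 : Fintype.card (f i).coe.edgeSet = Fintype.card (f i).edgeSet := by
      apply Fintype.card_congr
      have himg := Subgraph.image_coe_edgeSet_coe (f i)
      exact (Equiv.Set.image (Sym2.map (↑)) _
        (Sym2.map.injective Subtype.val_injective)).trans (Equiv.setCongr himg)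
    rw [hs]
    simp only [Set.toFinset_card]
    rw [← h2, ← Set.toFinset_card, ← edgeFinset, h1]
  have hGcard : (cube (2 * k + 1)).edgeFinset.card = n * 2 ^ k := by
    rw [hcard, Finset.sum_congr rfl fun i _ => hpart i, Finset.sum_const, Finset.card_univ,
      smul_eq_mul]
  -- cube edge count via degree sum
  have hVcard : Fintype.card (Fin (2 * k + 1) → ZMod 2) = 2 ^ (2 * k + 1) := by
    rw [Fintype.card_fun, ZMod.card, Fintype.card_fin]
  have hdegsum : 2 * (cube (2 * k + 1)).edgeFinset.card = (2 * k + 1) * 2 ^ (2 * k + 1) := by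
    rw [← sum_degrees_eq_twice_card_edges]
    rw [Finset.sum_congr rfl fun v _ => cube_degree (2 * k + 1) v, Finset.sum_const,
      Finset.card_univ, hVcard, smul_eq_mul, Nat.mul_comm]
  -- degree decomposition at each vertex
  have hdeg : ∀ v : Fin (2 * k + 1) → ZMod 2,
      (cube (2 * k + 1)).degree v = ∑ i, ((f i).neighborSet v).ncard := by
    intro v
    rw [← card_neighborFinset_eq_degree]
    have : (cube (2 * k + 1)).neighborFinset v =
        univ.biUnion fun i => ((f i).neighborSet v).toFinset := by
      ext w
      simp only [mem_neighborFinset, Finset.mem_biUnion, Finset.mem_univ, true_and,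
        Set.mem_toFinset, Subgraph.mem_neighborSet]
      constructor
      · intro h
        obtain ⟨i, hi, -⟩ := hcov s(v, w) ((mem_edgeSet _).mpr h)
        exact ⟨i, Subgraph.mem_edgeSet.mp hi⟩
      · rintro ⟨i, hi⟩; exact hi.adj_sub
    rw [this, Finset.card_biUnion]
    · exact Finset.sum_congr rfl fun i _ => (Set.ncard_eq_toFinset_card' _).symm
    · intro i _ j _ hij
      refine Finset.disjoint_left.mpr fun w hwi hwj => hij ?_
      rw [Set.mem_toFinset, Subgraph.mem_neighborSet] at hwi hwj
      exact (hcov s(v, w) ((mem_edgeSet _).mpr hwi.adj_sub)).unique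
        (Subgraph.mem_edgeSet.mpr hwi) (Subgraph.mem_edgeSet.mpr hwj)
  -- each vertex is an odd-degree vertex of some part
  have hodd : ∀ v : Fin (2 * k + 1) → ZMod 2, ∃ i, Odd ((f i).neighborSet v).ncard := by
    intro v
    by_contra h
    push_neg at h
    simp only [Nat.not_odd_iff_even] at h
    have : Even ((cube (2 * k + 1)).degree v) := by
      rw [hdeg v]
      exact Finset.even_sum _ fun i _ => h i
    rw [cube_degree] at this
    obtain ⟨c, hc⟩ := this
    omega
  -- each part has at most 2 odd-degree vertices
  have hbound : ∀ i, (univ.filter fun v : Fin (2 * k + 1) → ZMod 2 =>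
      Odd ((f i).neighborSet v).ncard).card ≤ 2 := by
    intro i
    obtain ⟨e⟩ := hiso i
    have h2 : (univ.filter fun u : ↥(f i).verts =>
        Odd ((f i).coe.neighborSet u).ncard).card = 2 := by
      rw [iso_odd_ncard e, pathGraph_odd_ncard _ hp1]
    refine le_trans ?_ (le_of_eq h2)
    refine Finset.card_le_card_of_surjOn
      (fun u : ↥(f i).verts => (u : Fin (2 * k + 1) → ZMod 2)) ?_
    intro v hv
    simp only [Finset.coe_filter, Finset.mem_univ, true_and, Set.mem_setOf_eq] at hv
    have hvert : v ∈ (f i).verts := by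
      have hne : ((f i).neighborSet v).Nonempty := by
        apply Set.nonempty_of_ncard_ne_zero
        rcases hv with ⟨c, hc⟩
        omega
      obtain ⟨w, hw⟩ := hne
      exact hw.fst_mem
    refine ⟨⟨v, hvert⟩, ?_, rfl⟩
    simp only [Finset.coe_filter, Finset.mem_univ, true_and, Set.mem_setOf_eq]
    have : ((f i).coe.neighborSet ⟨v, hvert⟩).ncard = ((f i).neighborSet v).ncard := by
      rw [← Nat.card_coe_set_eq, ← Nat.card_coe_set_eq]
      exact Nat.card_congr (Subgraph.coeNeighborSetEquiv ⟨v, hvert⟩)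
    rwa [this]
  -- double counting
  have hcount : 2 ^ (2 * k + 1) ≤ 2 * n := by
    calc 2 ^ (2 * k + 1) = Fintype.card (Fin (2 * k + 1) → ZMod 2) := hVcard.symm
    _ = ∑ _v : Fin (2 * k + 1) → ZMod 2, 1 := by simp
    _ ≤ ∑ v : Fin (2 * k + 1) → ZMod 2,
          (univ.filter fun i => Odd ((f i).neighborSet v).ncard).card := by
        apply Finset.sum_le_sum
        intro v _
        obtain ⟨i, hi⟩ := hodd v
        exact Finset.card_pos.mpr ⟨i, by simp [hi]⟩
    _ = ∑ i : ι, (univ.filter fun v : Fin (2 * k + 1) → ZMod 2 =>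
          Odd ((f i).neighborSet v).ncard).card := by
        simp_rw [Finset.card_filter]
        exact Finset.sum_comm
    _ ≤ ∑ _i : ι, 2 := Finset.sum_le_sum fun i _ => hbound i
    _ = 2 * n := by rw [Finset.sum_const, Finset.card_univ, smul_eq_mul, Nat.mul_comm]
  -- arithmetic contradiction
  have key : 2 * (n * 2 ^ k) = (2 * k + 1) * 2 ^ (2 * k + 1) := by rw [← hGcard]; exact hdegsum
  have hle : 2 ^ (2 * k + 1) * 2 ^ k ≤ (2 * k + 1) * 2 ^ (2 * k + 1) := by
    calc 2 ^ (2 * k + 1) * 2 ^ k ≤ (2 * n) * 2 ^ k := Nat.mul_le_mul_right _ hcount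
    _ = (2 * k + 1) * 2 ^ (2 * k + 1) := by rw [Nat.mul_assoc]; exact key
  have h2k : 2 ^ k ≤ 2 * k + 1 := by
    have hpos : 0 < 2 ^ (2 * k + 1) := Nat.pow_pos (by norm_num)
    rw [Nat.mul_comm (2 * k + 1)] at hle
    exact Nat.le_of_mul_le_mul_left hle hpos
  exact absurd h2k (Nat.not_le.mpr (two_pow_big k hk))
end

section
/- If n and m are both powers of 2 with m ≤ n, then there is a cycle of length m that divides Q_n (for m ≥ 4). -/
open SimpleGraph

namespace CycleCubeAux


abbrev V (n : ℕ) := Fin n → ZMod 2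

/-- membership profile of the `t`-th vertex of the base cycle, within a block of
size `k`: for `t < k` coordinates `r < t` are 1; for `k ≤ t < 2k` coordinates
`r ≥ t - k` are 1. -/
def chi (k t r : ℕ) : ZMod 2 :=
  if t < k then (if r < t then 1 else 0) else (if t - k ≤ r then 1 else 0)

/-- the `t`-th vertex of the base cycle in the block `[u, u+k)`. -/
def pvec (n k u t : ℕ) : V n :=
  fun l => if u ≤ (l : ℕ) ∧ (l : ℕ) < u + k then chi k t ((l : ℕ) - u) else 0

/-- sum of coordinates over the window `[u, u+w)`. -/
def wsum {n : ℕ} (u w : ℕ) (v : V n) : ZMod 2 :=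
  ∑ l : Fin n, if u ≤ (l : ℕ) ∧ (l : ℕ) < u + w then v l else 0

lemma mod_small {t k : ℕ} (h1 : k ≤ t) (h2 : t < 2 * k) : t % k = t - k := by
  rw [Nat.mod_eq_sub_mod h1, Nat.mod_eq_of_lt (by omega)]

lemma chi_as_ite (k t r : ℕ) :
    chi k t r = if ((t < k ∧ r < t) ∨ (k ≤ t ∧ t - k ≤ r)) then 1 else 0 := by
  unfold chi; split_ifs <;> first | rfl | (exfalso; omega)

lemma chi_step {k t r : ℕ} (hk : 0 < k) (ht : t < 2 * k) (hr : r < k) :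
    chi k (t + 1) r = chi k t r + (if r = t % k then 1 else 0) := by
  rcases Nat.lt_or_ge t k with h | h
  · rw [Nat.mod_eq_of_lt h]
    unfold chi
    split_ifs <;> first | rfl | decide | (exfalso; omega)
  · rw [mod_small h ht]
    unfold chi
    split_ifs <;> first | rfl | decide | (exfalso; omega)

lemma pvec_succ {n k u t : ℕ} (hk : 0 < k) (ht : t < 2 * k) :
    pvec n k u (t + 1) =
      fun l => pvec n k u t l + (if (l : ℕ) = u + t % k then 1 else 0) := by
  funext l
  by_cases hw : u ≤ (l : ℕ) ∧ (l : ℕ) < u + k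
  · have hr : (l : ℕ) - u < k := by omega
    simp only [pvec, if_pos hw]
    rw [chi_step hk ht hr]
    have hmod : t % k < k := Nat.mod_lt _ hk
    congr 2
    exact propext (by omega)
  · have hmod : t % k < k := Nat.mod_lt _ hk
    have : ¬ ((l : ℕ) = u + t % k) := by omega
    simp only [pvec, if_neg hw, if_neg this, add_zero]

lemma pvec_mod {n k u t : ℕ} (ht : t < 2 * k) :
    pvec n k u ((t + 1) % (2 * k)) = pvec n k u (t + 1) := by
  have hk : 0 < k := by omega
  rcases Nat.lt_or_ge (t + 1) (2 * k) with h | h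
  · rw [Nat.mod_eq_of_lt h]
  · have h2 : t + 1 = 2 * k := by omega
    rw [h2, Nat.mod_self]
    funext l
    by_cases hw : u ≤ (l : ℕ) ∧ (l : ℕ) < u + k
    · simp only [pvec, if_pos hw, chi_as_ite]
      split_ifs <;> first | rfl | (exfalso; omega)
    · simp only [pvec, if_neg hw]

lemma pvec_fold {n k u t : ℕ} (hk : 0 < k) (ht : t < 2 * k) :
    pvec n k u t =
      fun l => pvec n k u (t % k) l
        + (if k ≤ t then 1 else 0) * pvec n k u k l := by
  funext l
  by_cases hw : u ≤ (l : ℕ) ∧ (l : ℕ) < u + k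
  · have hr : (l : ℕ) - u < k := by omega
    rcases Nat.lt_or_ge t k with h | h
    · rw [Nat.mod_eq_of_lt h]
      simp only [pvec, if_pos hw, if_neg (by omega : ¬ k ≤ t), zero_mul, add_zero]
    · rw [mod_small h ht]
      simp only [pvec, if_pos hw, if_pos h, one_mul, chi_as_ite]
      split_ifs <;> first | rfl | decide | (exfalso; omega)
  · simp only [pvec, if_neg hw]
    ring

lemma ite01_inj {P Q : Prop} [Decidable P] [Decidable Q]
    (h : (if P then (1 : ZMod 2) else 0) = if Q then 1 else 0) : P ↔ Q := by
  split_ifs at h with h1 h2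
  · exact iff_of_true h1 h2
  · exact absurd h (by decide)
  · exact absurd h (by decide)
  · exact iff_of_false h1 ‹¬Q›

lemma pvec_inj {n k u t t' : ℕ} (hk : 0 < k) (hu : u + k ≤ n)
    (ht : t < 2 * k) (ht' : t' < 2 * k)
    (h : pvec n k u t = pvec n k u t') : t = t' := by
  have key : ∀ r, r < k →
      (((t < k ∧ r < t) ∨ (k ≤ t ∧ t - k ≤ r)) ↔
       ((t' < k ∧ r < t') ∨ (k ≤ t' ∧ t' - k ≤ r))) := by
    intro r hr
    have hl : (⟨u + r, by omega⟩ : Fin n) = (⟨u + r, by omega⟩ : Fin n) := rfl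
    have := congrFun h (⟨u + r, by omega⟩ : Fin n)
    simp only [pvec] at this
    rw [if_pos (by simp; omega), if_pos (by simp; omega)] at this
    simp only [Nat.add_sub_cancel_left] at this
    rw [chi_as_ite, chi_as_ite] at this
    exact ite01_inj this
  rcases Nat.lt_or_ge t k with h1 | h1 <;> rcases Nat.lt_or_ge t' k with h2 | h2
  · have k1 := key t h1
    have k2 := key t' h2
    omega
  · have k1 := key (k - 1) (by omega)
    omega
  · have k1 := key (k - 1) (by omega)
    omega
  · have k1 := key (t - k) (by omega)
    have k2 := key (t' - k) (by omega)
    omega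

lemma wsum_add {n u w : ℕ} (v v' : V n) :
    wsum u w (fun l => v l + v' l) = wsum u w v + wsum u w v' := by
  unfold wsum
  rw [← Finset.sum_add_distrib]
  exact Finset.sum_congr rfl fun l _ => by split_ifs <;> simp

lemma wsum_smul {n u w : ℕ} (a : ZMod 2) (v : V n) :
    wsum u w (fun l => a * v l) = a * wsum u w v := by
  unfold wsum
  rw [Finset.mul_sum]
  exact Finset.sum_congr rfl fun l _ => by split_ifs <;> simp

lemma wsum_bv {n u w : ℕ} (i : Fin n) :
    wsum u w (fun l => if l = i then 1 else 0)
      = if u ≤ (i : ℕ) ∧ (i : ℕ) < u + w then 1 else 0 := by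
  unfold wsum
  rw [Finset.sum_congr rfl (g := fun l =>
      if l = i then (if u ≤ (i : ℕ) ∧ (i : ℕ) < u + w then (1 : ZMod 2) else 0) else 0)
      (fun l _ => by
        by_cases hli : l = i
        · subst hli; simp
        · simp [hli])]
  simp

lemma wsum_one {n : ℕ} {u : ℕ} (hu : u < n) (v : V n) :
    wsum u 1 v = v ⟨u, hu⟩ := by
  unfold wsum
  rw [Finset.sum_congr rfl (g := fun l => if l = (⟨u, hu⟩ : Fin n) then v l else 0)
      (fun l _ => by
        congr 1
        exact propext ⟨fun h => Fin.ext (by simp only [Fin.val_mk]; omega),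
          fun h => by subst h; simp⟩)]
  simp

lemma card_window {n u k : ℕ} (hu : u + k ≤ n) :
    (Finset.univ.filter fun l : Fin n => u ≤ (l : ℕ) ∧ (l : ℕ) < u + k).card = k := by
  have himg : (Finset.univ.filter fun l : Fin n => u ≤ (l : ℕ) ∧ (l : ℕ) < u + k).image
      Fin.val = Finset.Ico u (u + k) := by
    ext x
    simp only [Finset.mem_image, Finset.mem_filter, Finset.mem_univ, true_and, Finset.mem_Ico]
    constructor
    · rintro ⟨l, hl, rfl⟩; exact hl
    · rintro ⟨h1, h2⟩; exact ⟨⟨x, by omega⟩, ⟨h1, h2⟩, rfl⟩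
  have := Finset.card_image_of_injective
    (Finset.univ.filter fun l : Fin n => u ≤ (l : ℕ) ∧ (l : ℕ) < u + k) Fin.val_injective
  rw [himg, Nat.card_Ico] at this
  omega

lemma wsum_window_ones {n u k : ℕ} (hu : u + k ≤ n) (hke : Even k) (v : V n)
    (hv : ∀ l : Fin n, u ≤ (l : ℕ) → (l : ℕ) < u + k → v l = 1) :
    wsum u k v = 0 := by
  unfold wsum
  have hcast : ((k : ZMod 2)) = 0 := by
    obtain ⟨c, rfl⟩ := hke
    push_cast
    rw [← two_mul, show ((2 : ZMod 2)) = 0 from rfl, zero_mul]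
  calc (∑ l : Fin n, if u ≤ (l : ℕ) ∧ (l : ℕ) < u + k then v l else 0)
      = (((Finset.univ.filter fun l : Fin n =>
          u ≤ (l : ℕ) ∧ (l : ℕ) < u + k).card : ℕ) : ZMod 2) := by
        rw [Finset.card_filter, Nat.cast_sum]
        refine Finset.sum_congr rfl fun l _ => ?_
        split_ifs with h
        · rw [hv l h.1 h.2]; simp
        · simp
    _ = 0 := by rw [card_window hu, hcast]



instance instNeZeroTwoMul {k : ℕ} [NeZero k] : NeZero (2 * k) :=
  ⟨mul_ne_zero two_ne_zero (NeZero.ne k)⟩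

structure Idx (n k : ℕ) : Type where
  u : ℕ
  g : V n
  hu : u + k ≤ n
  hdvd : k ∣ u
  hg1 : wsum u k g = 0
  hg2 : wsum u 1 g = 0

def cvert {n k : ℕ} (I : Idx n k) (t : Fin (2 * k)) : V n :=
  fun l => I.g l + pvec n k I.u (t : ℕ) l

lemma fin_succ_val {k : ℕ} [NeZero k] (hk : 0 < k) (t : Fin (2 * k)) :
    ((t + 1 : Fin (2 * k)) : ℕ) = ((t : ℕ) + 1) % (2 * k) := by
  rw [Fin.val_add, Fin.val_one']
  rw [Nat.mod_eq_of_lt (show 1 < 2 * k by omega)]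

lemma cvert_step {n k : ℕ} [NeZero k] (hk : 0 < k) (I : Idx n k) (t : Fin (2 * k)) :
    cvert I (t + 1) =
      fun l => cvert I t l + (if (l : ℕ) = I.u + (t : ℕ) % k then 1 else 0) := by
  funext l
  have h1 : ((t + 1 : Fin (2 * k)) : ℕ) = ((t : ℕ) + 1) % (2 * k) := fin_succ_val hk t
  simp only [cvert, h1, pvec_mod t.isLt, pvec_succ hk t.isLt]
  ring

lemma cube_adj_single {n : ℕ} (x : V n) (d : Fin n) :
    (cube n).Adj x (fun l => x l + if (l : ℕ) = (d : ℕ) then 1 else 0) := by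
  show hammingDist x (fun l => x l + if (l : ℕ) = (d : ℕ) then 1 else 0) = 1
  have h : ∀ l : Fin n, (x l ≠ x l + if (l : ℕ) = (d : ℕ) then 1 else 0) ↔ l = d := by
    intro l
    by_cases hld : (l : ℕ) = (d : ℕ)
    · simp only [if_pos hld]
      constructor
      · intro _; exact Fin.ext hld
      · intro _ hcontra
        exact one_ne_zero (left_eq_add.mp hcontra)
    · simp only [if_neg hld, add_zero]
      exact ⟨fun hc => absurd rfl hc, fun hl => absurd (congrArg Fin.val hl) hld⟩
  rw [hammingDist]
  refine Finset.card_eq_one.mpr ⟨d, ?_⟩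
  ext l
  simp only [Finset.mem_filter, Finset.mem_univ, true_and, Finset.mem_singleton]
  exact h l

def cyc {n k : ℕ} [NeZero k] (hk : 2 ≤ k) (I : Idx n k) : (cube n).Subgraph where
  verts := Set.range (cvert I)
  Adj x y := ∃ t : Fin (2 * k), (x = cvert I t ∧ y = cvert I (t + 1)) ∨
      (y = cvert I t ∧ x = cvert I (t + 1))
  adj_sub := by
    rintro x y ⟨t, (⟨rfl, rfl⟩ | ⟨rfl, rfl⟩)⟩
    · rw [cvert_step (by omega) I t]
      have hd : I.u + (t : ℕ) % k < n := by
        have h1 := I.hu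
        have h2 : (t : ℕ) % k < k := Nat.mod_lt _ (by omega)
        omega
      exact cube_adj_single (cvert I t) ⟨I.u + (t : ℕ) % k, hd⟩
    · refine (cube n).adj_symm ?_
      rw [cvert_step (by omega) I t]
      have hd : I.u + (t : ℕ) % k < n := by
        have h1 := I.hu
        have h2 : (t : ℕ) % k < k := Nat.mod_lt _ (by omega)
        omega
      exact cube_adj_single (cvert I t) ⟨I.u + (t : ℕ) % k, hd⟩
  edge_vert := by
    rintro x y ⟨t, (⟨rfl, _⟩ | ⟨_, rfl⟩)⟩
    exacts [⟨t, rfl⟩, ⟨t + 1, rfl⟩]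
  symm := ⟨by rintro x y ⟨t, h⟩; exact ⟨t, h.symm⟩⟩

lemma cvert_inj {n k : ℕ} (hk : 2 ≤ k) (I : Idx n k) : Function.Injective (cvert I) := by
  intro t t' h
  have hp : pvec n k I.u (t : ℕ) = pvec n k I.u (t' : ℕ) := by
    funext l
    exact add_left_cancel (congrFun h l)
  exact Fin.ext (pvec_inj (by omega) I.hu t.isLt t'.isLt hp)

lemma cyc_adj_iff {n k : ℕ} [NeZero k] (hk : 2 ≤ k) (I : Idx n k) (t t' : Fin (2 * k)) :
    (cyc hk I).Adj (cvert I t) (cvert I t') ↔ (t' = t + 1 ∨ t = t' + 1) := by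
  constructor
  · rintro ⟨s, (⟨h1, h2⟩ | ⟨h1, h2⟩)⟩
    · left
      obtain rfl : t = s := cvert_inj hk I h1
      exact cvert_inj hk I h2
    · right
      obtain rfl : t' = s := cvert_inj hk I h1
      exact cvert_inj hk I h2
  · rintro (h | h)
    · exact ⟨t, Or.inl ⟨rfl, by rw [h]⟩⟩
    · exact ⟨t', Or.inr ⟨rfl, by rw [h]⟩⟩

lemma fin_sub_iff {k : ℕ} [NeZero k] (hk : 2 ≤ k) (a b : Fin (2 * k)) :
    ((a - b : Fin (2 * k)) : ℕ) = 1 ↔ a = b + 1 := by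
  have hone : ((1 : Fin (2 * k)) : ℕ) = 1 := by
    rw [Fin.val_one']
    exact Nat.mod_eq_of_lt (by omega)
  constructor
  · intro h
    have h2 : a - b = 1 := Fin.ext (by rw [h, hone])
    rw [sub_eq_iff_eq_add] at h2
    rw [h2]; exact add_comm 1 b
  · intro h
    rw [h, add_sub_cancel_left, hone]

noncomputable def cycIso {n k : ℕ} [NeZero k] (hk : 2 ≤ k) (I : Idx n k) :
    cycleGraph (2 * k) ≃g (cyc hk I).coe := by
  have hbij : Function.Bijective
      (fun t : Fin (2 * k) => (⟨cvert I t, ⟨t, rfl⟩⟩ : (cyc hk I).verts)) := by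
    constructor
    · intro t t' h
      exact cvert_inj hk I (congrArg Subtype.val h)
    · rintro ⟨v, t, rfl⟩
      exact ⟨t, rfl⟩
  refine ⟨Equiv.ofBijective _ hbij, ?_⟩
  intro a b
  show (cyc hk I).Adj (cvert I a) (cvert I b) ↔ _
  rw [cyc_adj_iff hk I a b, cycleGraph_adj', fin_sub_iff hk, fin_sub_iff hk]
  tauto

lemma zmod2_cases (b : ZMod 2) : b = 0 ∨ b = 1 := by revert b; decide

lemma block_facts {k u r i : ℕ} (hk : 0 < k) (hdvd : k ∣ u) (hr : r < k) (hi : i = u + r) :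
    u = k * (i / k) ∧ i % k = r := by
  obtain ⟨c, rfl⟩ := hdvd
  subst hi
  constructor
  · rw [Nat.mul_add_div hk, Nat.div_eq_of_lt hr, add_zero]
  · rw [Nat.mul_add_mod, Nat.mod_eq_of_lt hr]

lemma key1_gen {n k : ℕ} [NeZero k] (hk0 : 0 < k) (I : Idx n k) (x : V n) (i : Fin n)
    (a bc : ZMod 2) (t : Fin (2 * k)) (r : ℕ)
    (htmod : (t : ℕ) % k = r)
    (hbc : (if k ≤ (t : ℕ) then (1 : ZMod 2) else 0) = bc)
    (hg : I.g = fun l => x l + pvec n k I.u r l + a * (if l = i then 1 else 0)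
      + bc * pvec n k I.u k l) :
    cvert I t = fun l => x l + a * (if l = i then 1 else 0) := by
  funext l
  have hfold := congrFun (pvec_fold (n := n) (u := I.u) hk0 t.isLt) l
  rw [htmod, hbc] at hfold
  show I.g l + pvec n k I.u (t : ℕ) l = _
  rw [hfold, congrFun hg l]
  clear hg hbc hfold htmod
  generalize x l = xl
  generalize pvec n k I.u r l = pl
  generalize pvec n k I.u k l = sl
  generalize (if l = i then (1 : ZMod 2) else 0) = el
  revert a bc xl pl sl el
  decide

lemma key2_gen {n k : ℕ} [NeZero k] (hk0 : 0 < k) (I : Idx n k) (x : V n) (i : Fin n)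
    (a : ZMod 2) (t : Fin (2 * k)) (r : ℕ)
    (htmod : (t : ℕ) % k = r)
    (hir : (i : ℕ) = I.u + r)
    (hkey1 : cvert I t = fun l => x l + a * (if l = i then 1 else 0)) :
    cvert I (t + 1) = fun l => (x l + a * (if l = i then 1 else 0))
      + (if l = i then 1 else 0) := by
  rw [cvert_step hk0 I t, hkey1]
  funext l
  congr 1
  refine if_congr ?_ rfl rfl
  rw [htmod]
  exact ⟨fun h => Fin.ext (by omega), fun h => by rw [h]; exact hir⟩

lemma build_adj {n k : ℕ} [NeZero k] (hk : 2 ≤ k) (I : Idx n k) (x : V n) (i : Fin n)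
    (a : ZMod 2) (t : Fin (2 * k))
    (hkey1 : cvert I t = fun l => x l + a * (if l = i then 1 else 0))
    (hkey2 : cvert I (t + 1) = fun l => (x l + a * (if l = i then 1 else 0))
      + (if l = i then 1 else 0)) :
    (cyc hk I).Adj x (fun l => x l + if l = i then 1 else 0) := by
  rcases zmod2_cases a with ha | ha <;> subst ha
  · refine ⟨t, Or.inl ⟨?_, ?_⟩⟩
    · rw [hkey1]; funext l; simp
    · rw [hkey2]; funext l; simp
  · refine ⟨t, Or.inr ⟨?_, ?_⟩⟩
    · rw [hkey1]; funext l; simp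
    · rw [hkey2]; funext l
      try simp only []
      generalize x l = xl
      generalize (if l = i then (1 : ZMod 2) else 0) = el
      revert xl el
      decide

lemma mem_cyc_iff {n k : ℕ} [NeZero k] (hk : 2 ≤ k) (I : Idx n k) (x : V n) (i : Fin n) :
    (cyc hk I).Adj x (fun l => x l + if l = i then 1 else 0) ↔
    (I.u = k * ((i : ℕ) / k) ∧ ∃ a b : ZMod 2, I.g = fun l =>
      x l + pvec n k I.u ((i : ℕ) % k) l + a * (if l = i then 1 else 0)
        + b * pvec n k I.u k l) := by
  have hk0 : 0 < k := by omega
  constructor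
  · rintro ⟨t, (⟨hx, hy⟩ | ⟨hy, hx⟩)⟩
    · -- x = cvert t, y = cvert (t+1)
      rw [cvert_step hk0 I t] at hy
      have hi : (i : ℕ) = I.u + (t : ℕ) % k := by
        by_contra hne
        have h1 : x i + (if i = i then (1 : ZMod 2) else 0)
            = cvert I t i + (if (i : ℕ) = I.u + (t : ℕ) % k then 1 else 0) := congrFun hy i
        have h2 : x i = cvert I t i := congrFun hx i
        rw [if_pos rfl, if_neg hne, add_zero, ← h2] at h1
        exact one_ne_zero (add_left_cancel (h1.trans (add_zero (x i)).symm))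
      obtain ⟨hu, hmod⟩ := block_facts hk0 I.hdvd (Nat.mod_lt _ hk0) hi
      refine ⟨hu, 0, (if k ≤ (t : ℕ) then 1 else 0), ?_⟩
      funext l
      have hfold := congrFun (pvec_fold (n := n) (u := I.u) hk0 t.isLt) l
      rw [← hmod] at hfold
      have hxl : x l = I.g l + pvec n k I.u (t : ℕ) l := congrFun hx l
      rw [hfold] at hxl
      rw [hxl]
      generalize I.g l = gl
      generalize pvec n k I.u ((i : ℕ) % k) l = pl
      generalize pvec n k I.u k l = sl
      generalize (if k ≤ (t : ℕ) then (1 : ZMod 2) else 0) = bb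
      generalize (if l = i then (1 : ZMod 2) else 0) = el
      revert gl pl sl bb el
      decide
    · -- y = cvert t, x = cvert (t+1)
      rw [cvert_step hk0 I t] at hx
      have hi : (i : ℕ) = I.u + (t : ℕ) % k := by
        by_contra hne
        have h1 : x i + (if i = i then (1 : ZMod 2) else 0) = cvert I t i := congrFun hy i
        have h2 : x i = cvert I t i + (if (i : ℕ) = I.u + (t : ℕ) % k then 1 else 0) :=
          congrFun hx i
        rw [if_pos rfl] at h1
        rw [if_neg hne, add_zero] at h2
        rw [h2] at h1
        exact one_ne_zero (add_left_cancel (h1.trans (add_zero _).symm))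
      obtain ⟨hu, hmod⟩ := block_facts hk0 I.hdvd (Nat.mod_lt _ hk0) hi
      refine ⟨hu, 1, (if k ≤ (t : ℕ) then 1 else 0), ?_⟩
      funext l
      have hfold := congrFun (pvec_fold (n := n) (u := I.u) hk0 t.isLt) l
      rw [← hmod] at hfold
      have hxl : x l = (I.g l + pvec n k I.u (t : ℕ) l)
          + (if (l : ℕ) = I.u + (t : ℕ) % k then 1 else 0) := congrFun hx l
      have hiteq : (if (l : ℕ) = I.u + (t : ℕ) % k then (1 : ZMod 2) else 0)
          = (if l = i then 1 else 0) := by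
        refine if_congr ?_ rfl rfl
        exact ⟨fun h => Fin.ext (by omega), fun h => by rw [h]; exact hi⟩
      rw [hiteq, hfold] at hxl
      rw [hxl]
      generalize I.g l = gl
      generalize pvec n k I.u ((i : ℕ) % k) l = pl
      generalize pvec n k I.u k l = sl
      generalize (if k ≤ (t : ℕ) then (1 : ZMod 2) else 0) = bb
      generalize (if l = i then (1 : ZMod 2) else 0) = el
      revert gl pl sl bb el
      decide
  · rintro ⟨hu, a, b, hg⟩
    have hir : (i : ℕ) = I.u + (i : ℕ) % k := by
      rw [hu]
      have := Nat.div_add_mod (i : ℕ) k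
      omega
    have hrk : (i : ℕ) % k < k := Nat.mod_lt _ hk0
    rcases zmod2_cases b with hb | hb <;> subst hb
    · -- b = 0 : t = r
      have h2k : (i : ℕ) % k < 2 * k := by omega
      set t : Fin (2 * k) := ⟨(i : ℕ) % k, h2k⟩ with ht
      have htmod : (t : ℕ) % k = (i : ℕ) % k := Nat.mod_eq_of_lt hrk
      have hbc : (if k ≤ (t : ℕ) then (1 : ZMod 2) else 0) = 0 := if_neg (by
        show ¬ k ≤ (i : ℕ) % k; omega)
      have hkey1 := key1_gen hk0 I x i a 0 t ((i : ℕ) % k) htmod hbc hg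
      exact build_adj hk I x i a t hkey1 (key2_gen hk0 I x i a t _ htmod hir hkey1)
    · -- b = 1 : t = k + r
      have h2k : k + (i : ℕ) % k < 2 * k := by omega
      set t : Fin (2 * k) := ⟨k + (i : ℕ) % k, h2k⟩ with ht
      have htmod : (t : ℕ) % k = (i : ℕ) % k := by
        show (k + (i : ℕ) % k) % k = (i : ℕ) % k
        rw [Nat.add_mod_left, Nat.mod_eq_of_lt hrk]
      have hbc : (if k ≤ (t : ℕ) then (1 : ZMod 2) else 0) = 1 := if_pos (by
        show k ≤ k + (i : ℕ) % k; omega)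
      have hkey1 := key1_gen hk0 I x i a 1 t ((i : ℕ) % k) htmod hbc hg
      exact build_adj hk I x i a t hkey1 (key2_gen hk0 I x i a t _ htmod hir hkey1)

lemma wsum_combo {n u w : ℕ} (A e s : V n) (a b : ZMod 2) :
    wsum u w (fun l => A l + a * e l + b * s l)
      = wsum u w A + a * wsum u w e + b * wsum u w s :=
  calc wsum u w (fun l => A l + a * e l + b * s l)
      = wsum u w (fun l => A l + a * e l) + wsum u w (fun l => b * s l) :=
        wsum_add _ _
    _ = (wsum u w A + wsum u w (fun l => a * e l)) + wsum u w (fun l => b * s l) := by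
        rw [wsum_add]
    _ = wsum u w A + a * wsum u w e + b * wsum u w s := by
        rw [wsum_smul, wsum_smul]

lemma z2_mk1 : ∀ α β e₂ : ZMod 2, α + α * 1 + (β + α * e₂) * 0 = 0 := by decide

lemma z2_mk2 : ∀ α β e₂ : ZMod 2, β + α * e₂ + (β + α * e₂) * 1 = 0 := by decide

lemma z2_solve : ∀ a b α β e₂ : ZMod 2, α + a * 1 + b * 0 = 0 →
    β + a * e₂ + b * 1 = 0 → a = α ∧ b = β + α * e₂ := by decide

lemma idx_ext {n k : ℕ} {I J : Idx n k} (h1 : I.u = J.u) (h2 : I.g = J.g) : I = J := by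
  cases I; cases J
  simp only at h1 h2
  subst h1; subst h2
  rfl

theorem divides_main (n k : ℕ) (hk : 2 ≤ k) (hke : Even k) (hkn : k ∣ n) :
    GraphDivides (cycleGraph (2 * k)) (cube n) := by
  haveI : NeZero k := ⟨by omega⟩
  have hk0 : 0 < k := by omega
  refine ⟨Idx n k, fun I => cyc hk I, fun I => ⟨cycIso hk I⟩, ?_⟩
  intro e he
  induction e using Sym2.ind with
  | _ x y =>
  rw [mem_edgeSet] at he
  -- extract the unique differing coordinate
  have he' : (Finset.univ.filter fun l : Fin n => x l ≠ y l).card = 1 := by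
    have h : hammingDist x y = 1 := he; unfold hammingDist at h; convert h
  obtain ⟨i, hi⟩ := Finset.card_eq_one.mp he'
  have hyx : y = fun l => x l + if l = i then 1 else 0 := by
    funext l
    by_cases hl : l = i
    · subst hl
      have hmem : l ∈ Finset.univ.filter fun l : Fin n => x l ≠ y l := by
        rw [hi]; exact Finset.mem_singleton_self l
      have hne : x l ≠ y l := (Finset.mem_filter.mp hmem).2
      rw [if_pos rfl]
      revert hne
      generalize x l = xl
      generalize y l = yl
      revert xl yl
      decide
    · have hmem : l ∉ Finset.univ.filter fun l' : Fin n => x l' ≠ y l' := by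
        rw [hi]
        simpa using hl
      have heq : x l = y l := by
        by_contra hne
        exact hmem (Finset.mem_filter.mpr ⟨Finset.mem_univ l, hne⟩)
      rw [if_neg hl, add_zero, heq]
  subst hyx
  -- setup the canonical index
  set u₀ : ℕ := k * ((i : ℕ) / k) with hu₀
  have hin : (i : ℕ) < n := i.isLt
  have hu0n : u₀ + k ≤ n := by
    have h1 : (i : ℕ) / k < n / k := Nat.div_lt_div_of_lt_of_dvd hkn hin
    have h2 : k * ((i : ℕ) / k + 1) ≤ k * (n / k) := Nat.mul_le_mul_left k (by omega)
    have h3 : k * (n / k) = n := Nat.mul_div_cancel' hkn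
    have h4 : k * ((i : ℕ) / k + 1) = k * ((i : ℕ) / k) + k := by ring
    omega
  have hu0lt : u₀ < n := by omega
  have hir : (i : ℕ) = u₀ + (i : ℕ) % k := by
    have := Nat.div_add_mod (i : ℕ) k
    omega
  have hrk : (i : ℕ) % k < k := Nat.mod_lt _ hk0
  -- wsum values
  have W1 : wsum u₀ k (fun l => if l = i then (1 : ZMod 2) else 0) = 1 := by
    rw [wsum_bv]
    exact if_pos ⟨by omega, by omega⟩
  have W2 : wsum u₀ k (pvec n k u₀ k) = 0 := by
    refine wsum_window_ones hu0n hke _ fun l h1 h2 => ?_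
    simp only [pvec, chi]
    rw [if_pos ⟨h1, h2⟩, if_neg (lt_irrefl k), if_pos (by omega)]
  have W3 : wsum u₀ 1 (pvec n k u₀ k) = 1 := by
    rw [wsum_one hu0lt]
    simp only [pvec, chi, Fin.val_mk]
    rw [if_pos ⟨le_refl u₀, by omega⟩, if_neg (lt_irrefl k), if_pos (by omega)]
  set A : V n := fun l => x l + pvec n k u₀ ((i : ℕ) % k) l with hA
  set α : ZMod 2 := wsum u₀ k A with hα
  set β : ZMod 2 := wsum u₀ 1 A with hβ
  set e₂ : ZMod 2 := wsum u₀ 1 (fun l => if l = i then (1 : ZMod 2) else 0) with he₂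
  set g₀ : V n := fun l => x l + pvec n k u₀ ((i : ℕ) % k) l
      + α * (if l = i then 1 else 0) + (β + α * e₂) * pvec n k u₀ k l with hg₀
  have hwg : ∀ w : ℕ, wsum u₀ w g₀ = wsum u₀ w A
      + α * wsum u₀ w (fun l => if l = i then (1 : ZMod 2) else 0)
      + (β + α * e₂) * wsum u₀ w (pvec n k u₀ k) := fun w =>
    wsum_combo A (fun l => if l = i then (1 : ZMod 2) else 0) (pvec n k u₀ k) α (β + α * e₂)
  have hg1 : wsum u₀ k g₀ = 0 := by
    rw [hwg k, W1, W2, ← hα]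
    exact z2_mk1 α β e₂
  have hg2 : wsum u₀ 1 g₀ = 0 := by
    rw [hwg 1, W3, ← hβ, ← he₂]
    exact z2_mk2 α β e₂
  refine ⟨⟨u₀, g₀, hu0n, ⟨_, rfl⟩, hg1, hg2⟩, ?_, ?_⟩
  · show s(x, fun l => x l + if l = i then 1 else 0)
      ∈ (cyc hk ⟨u₀, g₀, hu0n, ⟨_, rfl⟩, hg1, hg2⟩).edgeSet
    rw [Subgraph.mem_edgeSet]
    exact (mem_cyc_iff hk _ x i).mpr ⟨rfl, α, β + α * e₂, rfl⟩
  · rintro J hJ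
    rw [Subgraph.mem_edgeSet] at hJ
    obtain ⟨hJu, a, b, hJg⟩ := (mem_cyc_iff hk J x i).mp hJ
    rw [← hu₀] at hJu
    rw [hJu] at hJg
    -- determine a and b from the subgroup conditions
    have hJ1 : wsum u₀ k J.g = 0 := by rw [← hJu]; exact J.hg1
    have hJ2 : wsum u₀ 1 J.g = 0 := by rw [← hJu]; exact J.hg2
    have hcombo : ∀ w : ℕ, wsum u₀ w J.g = wsum u₀ w A
        + a * wsum u₀ w (fun l => if l = i then (1 : ZMod 2) else 0)
        + b * wsum u₀ w (pvec n k u₀ k) := by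
      intro w
      rw [hJg]
      exact wsum_combo A (fun l => if l = i then (1 : ZMod 2) else 0) (pvec n k u₀ k) a b
    have h1 : α + a * 1 + b * 0 = 0 := by
      rw [hcombo k, W1, W2] at hJ1
      exact hJ1
    have h2 : β + a * e₂ + b * 1 = 0 := by
      rw [hcombo 1, W3] at hJ2
      exact hJ2
    obtain ⟨ha, hb⟩ := z2_solve a b α β e₂ h1 h2
    refine idx_ext hJu ?_
    rw [hJg, ha, hb]

end CycleCubeAux

theorem cycle_pow_two_divides_cube_pow_two (a b n m : ℕ) (hn : n = 2 ^ a) (hm : m = 2 ^ b)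
    (hle : m ≤ n) (h4 : 4 ≤ m) : GraphDivides (cycleGraph m) (cube n) := by
  have hb2 : 2 ≤ b := by
    rcases (by omega : b = 0 ∨ b = 1 ∨ 2 ≤ b) with h | h | h
    · subst h; norm_num at hm; omega
    · subst h; norm_num at hm; omega
    · exact h
  set k : ℕ := 2 ^ (b - 1) with hkdef
  have hm2 : m = 2 * k := by
    have hb : b - 1 + 1 = b := by omega
    calc m = 2 ^ b := hm
      _ = 2 ^ (b - 1 + 1) := by rw [hb]
      _ = 2 ^ (b - 1) * 2 := pow_succ 2 (b - 1)
      _ = 2 * k := by rw [hkdef]; ring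
  have hke : Even k := by
    have h : k = 2 ^ (b - 2 + 1) := by rw [hkdef]; congr 1; omega
    rw [h, pow_succ]
    exact ⟨2 ^ (b - 2), by ring⟩
  have hk2 : 2 ≤ k := by
    have h : 2 ^ 1 ≤ 2 ^ (b - 1) := Nat.pow_le_pow_right (by norm_num) (by omega)
    simpa using h
  have hdvd : k ∣ n := by
    have hba : b ≤ a := by
      have h := hle
      rw [hm, hn] at h
      exact (Nat.pow_le_pow_iff_right (by norm_num)).mp h
    rw [hn, hkdef]
    exact pow_dvd_pow 2 (by omega)
  rw [hm2]
  exact CycleCubeAux.divides_main n k hk2 hke hdvd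
end
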